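/- Let r > 1 and C ≥ 1 be real numbers, let η, ε ∈ (0,1), let q ∈ ℕ be sufficiently large, let N ≥ 2, let I := (N/e, N], and let δ ∈ (((10·C·r·log log q)/(ε·log q))^{1/r}, 1/10). Let f : [I]_q → ℝ_{≥0} satisfy: (A1) there exists ν : [I]_q → ℝ_{≥0} with f(n) ≤ ν(n) for all n ∈ [I]_q, |𝔼_{n∈[I]_q} ν(n) − 1| ≤ η, and |𝔼_{n∈[I]_q} ν(n)·conj(χ)(n)| ≤ q^{−ε} for every non-principal Dirichlet character χ (mod q); (A2) there are at most C·δ^{−r} Dirichlet characters χ (mod q) with |𝔼_{n∈[I]_q} f(n)·conj(χ)(n)| ≥ δ. Then there exist a function g : (ℤ/qℤ)^× → ℝ_{≥0} and a constant C' depending only on r and C such that: (i) 0 ≤ g(a) ≤ 1 + η + C'·q^{−ε/2} for every a ∈ (ℤ/qℤ)^×; (ii) |𝔼_{n∈[I]_q} f(n)·conj(χ)(n) − 𝔼_{a∈(ℤ/qℤ)^×} g(a)·conj(χ)(a)| ≤ δ for every χ (mod q); (iii) |𝔼_{a} g(a)·conj(χ)(a)| ≤ |𝔼_{n∈[I]_q}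 f(n)·conj(χ)(n)| and |𝔼_{n∈[I]_q} f(n)·conj(χ)(n) − 𝔼_{a} g(a)·conj(χ)(a)| ≤ |𝔼_{n∈[I]_q} f(n)·conj(χ)(n)| for every χ (mod q); (iv) 𝔼_{a∈(ℤ/qℤ)^×} g(a) = 𝔼_{n∈[I]_q} f(n); (v) for every subgroup H ≤ (ℤ/qℤ)^× of index 2 and every b ∈ (ℤ/qℤ)^×, |𝔼_{n∈[I]_q} f(n)·1[n mod q ∈ bH] − 𝔼_{a∈(ℤ/qℤ)^×} g(a)·1[a ∈ bH]| ≤ C'·δ. -/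

import Mathlib

open scoped BigOperators Classical

noncomputable section

/-- `[I]_q` for `I = (N/e, N]`: the naturals in `(N/e, N]` coprime to `q`. -/
def Iqset (q : ℕ) (N : ℝ) : Finset ℕ :=
  (Finset.range (⌊N⌋₊ + 1)).filter fun n : ℕ => N / Real.exp 1 < (n : ℝ) ∧ Nat.Coprime n q

/-- `𝔼_{n ∈ [I]_q} f(n) · conj(χ)(n)`. -/
def Favg (q : ℕ) (N : ℝ) (f : ℕ → ℝ) (χ : DirichletCharacter ℂ q) : ℂ :=
  (∑ n ∈ Iqset q N, (f n : ℂ) * (starRingEnd ℂ) (χ (n : ZMod q))) / ((Iqset q N).card : ℂ)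

/-- `𝔼_{n ∈ [I]_q} f(n)`. -/
def FavgReal (q : ℕ) (N : ℝ) (f : ℕ → ℝ) : ℝ :=
  (∑ n ∈ Iqset q N, f n) / ((Iqset q N).card : ℝ)

/-- `𝔼_{a ∈ (ℤ/qℤ)ˣ} g(a) · conj(χ)(a)`. -/
def Gavg (q : ℕ) [NeZero q] (g : (ZMod q)ˣ → ℝ) (χ : DirichletCharacter ℂ q) : ℂ :=
  (∑ a : (ZMod q)ˣ, (g a : ℂ) * (starRingEnd ℂ) (χ ((a : (ZMod q)ˣ) : ZMod q))) /
    (Fintype.card ((ZMod q)ˣ) : ℂ)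

/-- `𝔼_{a ∈ (ℤ/qℤ)ˣ} g(a)`. -/
def GavgReal (q : ℕ) [NeZero q] (g : (ZMod q)ˣ → ℝ) : ℝ :=
  (∑ a : (ZMod q)ˣ, g a) / (Fintype.card ((ZMod q)ˣ) : ℝ)

/-- Indicator that the residue of an integer `n` lies in the coset `bH ⊆ (ℤ/qℤ)ˣ`. -/
def cosetIndNat (q : ℕ) (H : Subgroup ((ZMod q)ˣ)) (b : (ZMod q)ˣ) (n : ℕ) : ℝ :=
  if ∃ u : (ZMod q)ˣ, ((u : ZMod q) = (n : ZMod q)) ∧ b⁻¹ * u ∈ H then 1 else 0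

/-- Indicator that a unit `a` lies in the coset `bH`. -/
def cosetInd (q : ℕ) (H : Subgroup ((ZMod q)ˣ)) (b a : (ZMod q)ˣ) : ℝ :=
  if b⁻¹ * a ∈ H then 1 else 0

variable {q : ℕ} [NeZero q]

lemma conj_char (χ : DirichletCharacter ℂ q) (u : (ZMod q)ˣ) :
    (starRingEnd ℂ) (χ (u : ZMod q)) = χ ((u⁻¹ : (ZMod q)ˣ) : ZMod q) := by
  have h1 : χ (u : ZMod q) * χ ((u⁻¹ : (ZMod q)ˣ) : ZMod q) = 1 := by
    rw [← map_mul, Units.mul_inv, map_one]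
  have h2 : ‖χ (u : ZMod q)‖ = 1 := by
    exact χ.unit_norm_eq_one u
  rw [← Complex.inv_eq_conj h2]
  exact inv_eq_of_mul_eq_one_right h1

lemma orth1 (u : (ZMod q)ˣ) :
    ∑ χ : DirichletCharacter ℂ q, χ (u : ZMod q)
      = if u = 1 then (Fintype.card (ZMod q)ˣ : ℂ) else 0 := by
  rw [DirichletCharacter.sum_characters_eq, ZMod.card_units_eq_totient]
  simp [Units.val_eq_one]

lemma orth_pt (b b' : (ZMod q)ˣ) :
    ∑ χ : DirichletCharacter ℂ q, χ (b : ZMod q) * (starRingEnd ℂ) (χ (b' : ZMod q))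
      = if b = b' then (Fintype.card (ZMod q)ˣ : ℂ) else 0 := by
  have key : ∀ χ : DirichletCharacter ℂ q,
      χ (b : ZMod q) * (starRingEnd ℂ) (χ (b' : ZMod q)) = χ ((b * b'⁻¹ : (ZMod q)ˣ) : ZMod q) := by
    intro χ
    rw [conj_char, ← map_mul]
    norm_cast
  have hiff : (b * b'⁻¹ = 1) = (b = b') := propext mul_inv_eq_one
  rw [Finset.sum_congr rfl fun χ _ => key χ, orth1]
  simp only [hiff]

lemma sum_units_eq (χ₀ : DirichletCharacter ℂ q) :
    ∑ a : (ZMod q)ˣ, χ₀ (a : ZMod q) = ∑ x : ZMod q, χ₀ x := by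
  classical
  have hinj : ∀ x ∈ (Finset.univ : Finset (ZMod q)ˣ), ∀ y ∈ (Finset.univ : Finset (ZMod q)ˣ),
      (x : ZMod q) = (y : ZMod q) → x = y := fun x _ y _ h => Units.ext h
  have h1 : ∑ x ∈ Finset.univ.image (fun a : (ZMod q)ˣ => (a : ZMod q)), χ₀ x
      = ∑ a : (ZMod q)ˣ, χ₀ (a : ZMod q) := Finset.sum_image hinj
  rw [← h1]
  apply Finset.sum_subset (Finset.subset_univ _)
  intro x _ hx
  apply χ₀.map_nonunit
  intro hu
  exact hx (Finset.mem_image.mpr ⟨hu.unit, Finset.mem_univ _, hu.unit_spec⟩)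

lemma orth2 (χ ψ : DirichletCharacter ℂ q) :
    ∑ a : (ZMod q)ˣ, χ (a : ZMod q) * (starRingEnd ℂ) (ψ (a : ZMod q))
      = if χ = ψ then (Fintype.card (ZMod q)ˣ : ℂ) else 0 := by
  have key : ∀ a : (ZMod q)ˣ,
      χ (a : ZMod q) * (starRingEnd ℂ) (ψ (a : ZMod q)) = (χ * ψ⁻¹) (a : ZMod q) := by
    intro a
    rw [MulChar.mul_apply, conj_char, MulChar.inv_apply, Ring.inverse_unit]
  rw [Finset.sum_congr rfl fun a _ => key a]
  by_cases h : χ = ψ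
  · subst h
    rw [mul_inv_cancel]
    simp only [MulChar.one_apply_coe]
    simp
  · rw [if_neg h, sum_units_eq]
    exact MulChar.sum_eq_zero_of_ne_one (by rwa [Ne, mul_inv_eq_one])


lemma exp_diff_eq' (a b : ℝ) :
    Complex.exp (a * Complex.I) - Complex.exp (b * Complex.I)
      = Complex.exp (b * Complex.I) * (Complex.exp ((↑(a - b)) * Complex.I) - 1) := by
  rw [mul_sub, mul_one, ← Complex.exp_add]
  congr 2
  push_cast
  ring

lemma chord' {z w : ℂ} (hz : ‖z‖ = 1) (hw : ‖w‖ = 1) {t : ℝ}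
    (h : |z.arg - w.arg| ≤ t) (ht : t ≤ 1) : ‖z - w‖ ≤ 2 * t := by
  have hz' : Complex.exp (z.arg * Complex.I) = z := by
    have := Complex.norm_mul_exp_arg_mul_I z
    rwa [hz, Complex.ofReal_one, one_mul] at this
  have hw' : Complex.exp (w.arg * Complex.I) = w := by
    have := Complex.norm_mul_exp_arg_mul_I w
    rwa [hw, Complex.ofReal_one, one_mul] at this
  have habs : ‖((↑(z.arg - w.arg)) * Complex.I : ℂ)‖ = |z.arg - w.arg| := by
    rw [norm_mul, Complex.norm_I, mul_one, Complex.norm_real, Real.norm_eq_abs]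
  have h1 : ‖((↑(z.arg - w.arg)) * Complex.I : ℂ)‖ ≤ 1 := by
    rw [habs]; exact le_trans h ht
  have h2 := Complex.norm_exp_sub_one_le h1
  rw [habs] at h2
  calc ‖z - w‖ = ‖Complex.exp (z.arg * Complex.I) - Complex.exp (w.arg * Complex.I)‖ := by
        rw [hz', hw']
    _ = ‖w‖ * ‖Complex.exp ((↑(z.arg - w.arg)) * Complex.I) - 1‖ := by
        rw [exp_diff_eq', norm_mul, hw']
    _ ≤ 1 * (2 * |z.arg - w.arg|) := by
        rw [hw]; exact mul_le_mul_of_nonneg_left h2 zero_le_one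
    _ ≤ 2 * t := by rw [one_mul]; linarith [abs_nonneg (z.arg - w.arg)]

set_option maxHeartbeats 1000000 in
lemma bohr_lower (q : ℕ) [NeZero q] (S : Finset (DirichletCharacter ℂ q)) (δ : ℝ)
    (hδ0 : 0 < δ) (hδu : δ < 1 / 10) :
    (Fintype.card (ZMod q)ˣ : ℝ) ≤ ((⌈(64:ℝ)/δ⌉₊ + 1 : ℕ) : ℝ) ^ S.card *
      ((Finset.univ.filter (fun a : (ZMod q)ˣ =>
          ∀ χ ∈ S, ‖χ ((a : (ZMod q)ˣ) : ZMod q) - 1‖ ≤ δ / 4)).card : ℝ) := by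
  classical
  set m : ℕ := ⌈(64:ℝ)/δ⌉₊ with hmdef
  have hm64 : (64:ℝ)/δ ≤ m := Nat.le_ceil _
  have h640 : (640:ℝ) ≤ 64/δ := by
    rw [le_div_iff₀ hδ0]; linarith
  have hmR : (0:ℝ) < m := by linarith
  have pi_pos := Real.pi_pos
  have pi_le := Real.pi_le_four
  set B : Finset (ZMod q)ˣ := Finset.univ.filter (fun a : (ZMod q)ˣ =>
      ∀ χ ∈ S, ‖χ ((a : (ZMod q)ˣ) : ZMod q) - 1‖ ≤ δ / 4) with hBdef
  -- cell function
  set cell : ℂ → ℕ := fun z => ⌊(z.arg + Real.pi) * m / (2 * Real.pi)⌋₊ with hcelldef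
  have hcell_le : ∀ z : ℂ, cell z ≤ m := by
    intro z
    have h1 : (z.arg + Real.pi) * m / (2 * Real.pi) ≤ (m : ℝ) := by
      rw [div_le_iff₀ (by positivity)]
      have := Complex.arg_le_pi z
      nlinarith
    calc cell z ≤ ⌊(m : ℝ)⌋₊ := Nat.floor_mono h1
      _ = m := Nat.floor_natCast m
  set cf : (ZMod q)ˣ → (↥S → Fin (m+1)) :=
    fun a χs => ⟨cell (χs.1 ((a : (ZMod q)ˣ) : ZMod q)), Nat.lt_succ_of_le (hcell_le _)⟩
    with hcfdef
  have hfib : (Fintype.card (ZMod q)ˣ) =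
      ∑ y : (↥S → Fin (m+1)), (Finset.univ.filter (fun a => cf a = y)).card := by
    rw [← Finset.card_univ]
    exact Finset.card_eq_sum_card_fiberwise (fun a _ => Finset.mem_univ _)
  have hcardT : (Fintype.card (↥S → Fin (m+1)) : ℝ) = ((m+1 : ℕ) : ℝ) ^ S.card := by
    rw [Fintype.card_fun, Fintype.card_coe, Fintype.card_fin]
    norm_cast
  have hpowpos : (0:ℝ) < ((m+1:ℕ):ℝ) ^ S.card := by positivity
  obtain ⟨y₀, hy₀⟩ : ∃ y : (↥S → Fin (m+1)), (Fintype.card (ZMod q)ˣ : ℝ) ≤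
      ((m+1:ℕ):ℝ) ^ S.card * ((Finset.univ.filter (fun a => cf a = y)).card : ℝ) := by
    have hne : (Finset.univ : Finset (↥S → Fin (m+1))).Nonempty := Finset.univ_nonempty
    have hsums : ∑ _y : (↥S → Fin (m+1)), (Fintype.card (ZMod q)ˣ : ℝ) / ((m+1:ℕ):ℝ) ^ S.card
        ≤ ∑ y : (↥S → Fin (m+1)), ((Finset.univ.filter (fun a => cf a = y)).card : ℝ) := by
      rw [Finset.sum_const, Finset.card_univ, nsmul_eq_mul]
      have : (Fintype.card (↥S → Fin (m+1)) : ℝ) *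
          ((Fintype.card (ZMod q)ˣ : ℝ) / ((m+1:ℕ):ℝ) ^ S.card)
            = (Fintype.card (ZMod q)ˣ : ℝ) := by
        rw [hcardT]; field_simp
      rw [this]
      rw [show ∑ y : (↥S → Fin (m+1)), ((Finset.univ.filter (fun a => cf a = y)).card : ℝ)
          = ((∑ y : (↥S → Fin (m+1)), (Finset.univ.filter (fun a => cf a = y)).card : ℕ) : ℝ)
        from by push_cast; rfl]
      rw [← hfib]
    obtain ⟨y, _, hy⟩ := Finset.exists_le_of_sum_le hne hsums
    refine ⟨y, ?_⟩
    rw [div_le_iff₀ hpowpos] at hy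
    linarith
  set F := Finset.univ.filter (fun a => cf a = y₀) with hFdef
  have hGpos : (0:ℝ) < (Fintype.card (ZMod q)ˣ : ℝ) := by
    have : 0 < Fintype.card (ZMod q)ˣ := Fintype.card_pos
    exact_mod_cast this
  have hFpos : 0 < F.card := by
    by_contra h
    have h0 : F.card = 0 := Nat.eq_zero_of_not_pos h
    rw [h0] at hy₀
    norm_num at hy₀
    exact (NeZero.ne q) hy₀
  obtain ⟨a₀, ha₀⟩ := Finset.card_pos.mp hFpos
  have hFB : F.card ≤ B.card := by
    have himg : F.image (fun a => a * a₀⁻¹) ⊆ B := by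
      intro x hx
      obtain ⟨a, haF, hax⟩ := Finset.mem_image.mp hx
      rw [hBdef, Finset.mem_filter]
      refine ⟨Finset.mem_univ _, fun χ hχS => ?_⟩
      have hcf : cf a = cf a₀ := by
        rw [(Finset.mem_filter.mp haF).2, (Finset.mem_filter.mp ha₀).2]
      have hcc : cell (χ ((a : (ZMod q)ˣ) : ZMod q)) = cell (χ ((a₀ : (ZMod q)ˣ) : ZMod q)) := by
        have h := congrFun hcf ⟨χ, hχS⟩
        exact congrArg Fin.val h
      set z := χ ((a : (ZMod q)ˣ) : ZMod q) with hzdef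
      set w := χ ((a₀ : (ZMod q)ˣ) : ZMod q) with hwdef
      have hz1 : ‖z‖ = 1 := χ.unit_norm_eq_one a
      have hw1 : ‖w‖ = 1 := χ.unit_norm_eq_one a₀
      -- same cell implies args close
      have hargs : |z.arg - w.arg| ≤ 2 * Real.pi / m := by
        set x1 : ℝ := (z.arg + Real.pi) * m / (2 * Real.pi) with hx1def
        set x2 : ℝ := (w.arg + Real.pi) * m / (2 * Real.pi) with hx2def
        have hz0 : 0 ≤ z.arg + Real.pi := by linarith [Complex.neg_pi_lt_arg z]
        have hw0 : 0 ≤ w.arg + Real.pi := by linarith [Complex.neg_pi_lt_arg w]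
        have hx10 : 0 ≤ x1 := by
          rw [hx1def]
          exact div_nonneg (mul_nonneg hz0 hmR.le) (by positivity)
        have hx20 : 0 ≤ x2 := by
          rw [hx2def]
          exact div_nonneg (mul_nonneg hw0 hmR.le) (by positivity)
        have hfl : ⌊x1⌋₊ = ⌊x2⌋₊ := hcc
        have h12 : x1 < x2 + 1 := by
          calc x1 < ⌊x1⌋₊ + 1 := Nat.lt_floor_add_one x1
            _ = ⌊x2⌋₊ + 1 := by rw [hfl]
            _ ≤ x2 + 1 := by
                have := Nat.floor_le hx20
                linarith
        have h21 : x2 < x1 + 1 := by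
          calc x2 < ⌊x2⌋₊ + 1 := Nat.lt_floor_add_one x2
            _ = ⌊x1⌋₊ + 1 := by rw [hfl]
            _ ≤ x1 + 1 := by
                have := Nat.floor_le hx10
                linarith
        have habs1 : |x1 - x2| < 1 := abs_sub_lt_iff.mpr ⟨by linarith, by linarith⟩
        have hd2 : z.arg - w.arg = (x1 - x2) * (2 * Real.pi) / m := by
          rw [hx1def, hx2def]
          field_simp
          ring
        have habs2 : |2 * Real.pi / (m:ℝ)| = 2 * Real.pi / (m:ℝ) := abs_of_pos (by positivity)
        calc |z.arg - w.arg| = |x1 - x2| * ((2 * Real.pi) / m) := by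
              rw [hd2, mul_div_assoc, abs_mul, habs2]
          _ ≤ 1 * ((2 * Real.pi) / m) :=
              mul_le_mul_of_nonneg_right habs1.le (by positivity)
          _ = 2 * Real.pi / m := one_mul _
      have hmbig : (640:ℝ) ≤ (m:ℝ) := le_trans h640 hm64
      have ht1 : 2 * Real.pi / (m:ℝ) ≤ 1 := by
        rw [div_le_one hmR]
        linarith
      have hchord := chord' hz1 hw1 hargs ht1
      have hδm : (64:ℝ) ≤ δ * m := by
        have := (div_le_iff₀ hδ0).mp hm64
        linarith
      have hfact : χ (((a * a₀⁻¹ : (ZMod q)ˣ) : ZMod q)) - 1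
          = (z - w) * χ (((a₀⁻¹ : (ZMod q)ˣ) : ZMod q)) := by
        have e1 : χ (((a * a₀⁻¹ : (ZMod q)ˣ) : ZMod q))
            = z * χ (((a₀⁻¹ : (ZMod q)ˣ) : ZMod q)) := by
          rw [Units.val_mul, map_mul]
        have e2 : w * χ (((a₀⁻¹ : (ZMod q)ˣ) : ZMod q)) = 1 := by
          rw [hwdef, ← map_mul, ← Units.val_mul, mul_inv_cancel, Units.val_one, map_one]
        rw [e1, ← e2]
        ring
      have hxeq : a * a₀⁻¹ = x := hax
      rw [← hxeq, hfact, norm_mul]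
      have : ‖χ (((a₀⁻¹ : (ZMod q)ˣ) : ZMod q))‖ = 1 := χ.unit_norm_eq_one a₀⁻¹
      rw [this, mul_one]
      calc ‖z - w‖ ≤ 2 * (2 * Real.pi / m) := hchord
        _ = 4 * Real.pi / m := by ring
        _ ≤ δ / 4 := by
            rw [div_le_div_iff₀ hmR (by norm_num)]
            linarith
    have hinj : Set.InjOn (fun a => a * a₀⁻¹) ↑F := by
      intro x _ y _ h
      exact mul_right_cancel h
    calc F.card = (F.image (fun a => a * a₀⁻¹)).card := (Finset.card_image_of_injOn hinj).symm
      _ ≤ B.card := Finset.card_le_card himg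
  calc (Fintype.card (ZMod q)ˣ : ℝ)
      ≤ ((m+1:ℕ):ℝ) ^ S.card * (F.card : ℝ) := hy₀
    _ ≤ ((m+1:ℕ):ℝ) ^ S.card * (B.card : ℝ) := by
        apply mul_le_mul_of_nonneg_left _ hpowpos.le
        exact_mod_cast hFB


set_option maxHeartbeats 1000000 in
lemma numeric_bound (r C ε : ℝ) (hr : 1 < r) (hC : 1 ≤ C) (hε : 0 < ε) (hε1 : ε < 1)
    (q : ℕ) (hq : Real.exp (Real.exp 5) ≤ (q : ℝ)) (δ : ℝ)
    (hδl : ((10 * C * r * Real.log (Real.log (q : ℝ))) / (ε * Real.log (q : ℝ))) ^ (1 / r) < δ)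
    (hδu : δ < 1 / 10)
    (k : ℕ) (hk : (k : ℝ) ≤ C * δ ^ (-r)) (M : ℝ) (hM1 : 1 ≤ M) (hM2 : M ≤ 100 / δ) :
    M ^ (k : ℝ) ≤ (q : ℝ) ^ (ε / 2) := by
  have hq0 : (0 : ℝ) < q := lt_of_lt_of_le (Real.exp_pos _) hq
  set L := Real.log (q : ℝ) with hLdef
  have hL : Real.exp 5 ≤ L := (Real.le_log_iff_exp_le hq0).mpr hq
  have hL0 : 0 < L := lt_of_lt_of_le (Real.exp_pos 5) hL
  set LL := Real.log L with hLLdef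
  have hLL : 5 ≤ LL := (Real.le_log_iff_exp_le hL0).mpr hL
  have hLL0 : 0 < LL := by linarith
  have hr0 : 0 < r := by linarith
  have hC0 : 0 < C := by linarith
  set X := (10 * C * r * LL) / (ε * L) with hXdef
  have hXnum : 0 < 10 * C * r * LL := by positivity
  have hXden : 0 < ε * L := by positivity
  have hX0 : 0 < X := div_pos hXnum hXden
  have hδ0 : 0 < δ := lt_of_le_of_lt (Real.rpow_nonneg hX0.le _) hδl
  -- δ ^ (-r) ≤ 1/X
  have hXδ : X < δ ^ r := by
    have h := Real.rpow_lt_rpow (Real.rpow_nonneg hX0.le _) hδl hr0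
    rwa [← Real.rpow_mul hX0.le, one_div_mul_cancel (ne_of_gt hr0), Real.rpow_one] at h
  have hδr : δ ^ (-r) ≤ (ε * L) / (10 * C * r * LL) := by
    rw [Real.rpow_neg hδ0.le]
    have h2 : (δ ^ r)⁻¹ ≤ X⁻¹ := by
      apply inv_anti₀ hX0 hXδ.le
    calc (δ ^ r)⁻¹ ≤ X⁻¹ := h2
      _ = (ε * L) / (10 * C * r * LL) := by rw [hXdef, inv_div]
  -- log M ≤ 2 * LL
  have hlog100 : Real.log 100 ≤ 5 := by
    have h5 : Real.exp 5 = (Real.exp 1) ^ (5 : ℕ) := by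
      rw [← Real.exp_nat_mul]; norm_num
    have h27 : (2.7 : ℝ) ≤ Real.exp 1 := by nlinarith [Real.exp_one_gt_d9]
    rw [Real.log_le_iff_le_exp (by norm_num), h5]
    calc (100 : ℝ) ≤ 2.7 ^ (5 : ℕ) := by norm_num
      _ ≤ (Real.exp 1) ^ (5 : ℕ) := pow_le_pow_left₀ (by norm_num) h27 5
  have hlogX : -Real.log X ≤ LL := by
    have hXeq : Real.log X = Real.log (10 * C * r * LL) - Real.log (ε * L) :=
      Real.log_div (ne_of_gt hXnum) (ne_of_gt hXden)
    have hmul : Real.log (ε * L) = Real.log ε + Real.log L :=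
      Real.log_mul (ne_of_gt hε) (ne_of_gt hL0)
    have hnum : 0 ≤ Real.log (10 * C * r * LL) := by
      apply Real.log_nonneg
      have hcr : (1 : ℝ) * 1 ≤ C * r := mul_le_mul hC hr.le zero_le_one hC0.le
      have hcrl : ((1 : ℝ) * 1) * 5 ≤ (C * r) * LL :=
        mul_le_mul hcr hLL (by norm_num) (by positivity)
      nlinarith [hcrl]
    have hεlog : Real.log ε ≤ 0 := Real.log_nonpos hε.le hε1.le
    rw [hXeq, hmul, ← hLLdef]
    linarith
  have hlogδ : (1 / r) * Real.log X ≤ Real.log δ := by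
    have h1 : Real.log (X ^ (1 / r)) ≤ Real.log δ :=
      Real.log_le_log (Real.rpow_pos_of_pos hX0 _) hδl.le
    rwa [Real.log_rpow hX0] at h1
  have hlogM : Real.log M ≤ 2 * LL := by
    have h1 : Real.log M ≤ Real.log (100 / δ) :=
      Real.log_le_log (by linarith) hM2
    have h2 : Real.log (100 / δ) = Real.log 100 - Real.log δ :=
      Real.log_div (by norm_num) (ne_of_gt hδ0)
    have h3 : -Real.log δ ≤ (1 / r) * LL := by
      have : -Real.log δ ≤ -(1 / r) * Real.log X := by linarith
      have h4 : -(1 / r) * Real.log X = (1 / r) * (-Real.log X) := by ring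
      have h5 : (1 / r) * (-Real.log X) ≤ (1 / r) * LL :=
        mul_le_mul_of_nonneg_left hlogX (by positivity)
      linarith
    have h6 : (1 / r) * LL ≤ LL := by
      have : 1 / r ≤ 1 := by
        rw [div_le_one hr0]; linarith
      nlinarith
    linarith
  have hlogM0 : 0 ≤ Real.log M := Real.log_nonneg hM1
  have hkM : (k : ℝ) * Real.log M ≤ (ε / 2) * L := by
    have hk0 : (0 : ℝ) ≤ C * δ ^ (-r) := by positivity
    have h1 : (k : ℝ) * Real.log M ≤ (C * δ ^ (-r)) * (2 * LL) :=
      mul_le_mul hk hlogM hlogM0 hk0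
    have h2 : (C * δ ^ (-r)) * (2 * LL) ≤ (C * ((ε * L) / (10 * C * r * LL))) * (2 * LL) := by
      apply mul_le_mul_of_nonneg_right _ (by positivity)
      exact mul_le_mul_of_nonneg_left hδr hC0.le
    have h3 : (C * ((ε * L) / (10 * C * r * LL))) * (2 * LL) = (ε * L) / (5 * r) := by
      field_simp
      ring
    have h4 : (ε * L) / (5 * r) ≤ (ε / 2) * L := by
      rw [div_le_iff₀ (by positivity)]
      have hx : 0 ≤ (ε * L) * (5 * r - 2) := mul_nonneg (by positivity) (by linarith)
      nlinarith [hx]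
    linarith
  have hM0 : 0 < M := lt_of_lt_of_le one_pos hM1
  rw [Real.rpow_def_of_pos hM0, Real.rpow_def_of_pos hq0]
  apply Real.exp_le_exp.mpr
  calc Real.log M * (k : ℝ) = (k : ℝ) * Real.log M := by ring
    _ ≤ (ε / 2) * L := hkM
    _ = L * (ε / 2) := by ring

lemma Iq_coprime {q : ℕ} {N : ℝ} {n : ℕ} (hn : n ∈ Iqset q N) : Nat.Coprime n q :=
  ((Finset.mem_filter.mp hn).2).2

lemma Iq_isUnit {q : ℕ} {N : ℝ} {n : ℕ} (hn : n ∈ Iqset q N) : IsUnit ((n : ZMod q)) :=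
  ⟨ZMod.unitOfCoprime n (Iq_coprime hn), ZMod.coe_unitOfCoprime n (Iq_coprime hn)⟩

lemma Favg_one (q : ℕ) (N : ℝ) (h : ℕ → ℝ) : Favg q N h 1 = ((FavgReal q N h : ℝ) : ℂ) := by
  unfold Favg FavgReal
  push_cast
  congr 1
  apply Finset.sum_congr rfl
  intro n hn
  rw [MulChar.one_apply (Iq_isUnit hn), map_one, mul_one]

lemma Gavg_one (q : ℕ) [NeZero q] (g : (ZMod q)ˣ → ℝ) :
    Gavg q g 1 = ((GavgReal q g : ℝ) : ℂ) := by
  unfold Gavg GavgReal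
  push_cast
  congr 1
  apply Finset.sum_congr rfl
  intro a _
  rw [MulChar.one_apply_coe, map_one, mul_one]

lemma Favg_norm_le (q : ℕ) (N : ℝ) (h : ℕ → ℝ) (hh : ∀ n ∈ Iqset q N, 0 ≤ h n)
    (χ : DirichletCharacter ℂ q) : ‖Favg q N h χ‖ ≤ FavgReal q N h := by
  unfold Favg FavgReal
  rw [norm_div]
  have hden : ‖((Iqset q N).card : ℂ)‖ = ((Iqset q N).card : ℝ) := by
    rw [Complex.norm_natCast]
  rw [hden]
  have hnum : ‖∑ n ∈ Iqset q N, (h n : ℂ) * (starRingEnd ℂ) (χ (n : ZMod q))‖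
      ≤ ∑ n ∈ Iqset q N, h n := by
    calc ‖∑ n ∈ Iqset q N, (h n : ℂ) * (starRingEnd ℂ) (χ (n : ZMod q))‖
        ≤ ∑ n ∈ Iqset q N, ‖(h n : ℂ) * (starRingEnd ℂ) (χ (n : ZMod q))‖ :=
          norm_sum_le _ _
      _ ≤ ∑ n ∈ Iqset q N, h n := by
          apply Finset.sum_le_sum
          intro n hn
          rw [norm_mul, Complex.norm_real, RCLike.norm_conj]
          calc |h n| * ‖χ ((n : ℕ) : ZMod q)‖ ≤ |h n| * 1 :=
                mul_le_mul_of_nonneg_left (DirichletCharacter.norm_le_one χ _) (abs_nonneg _)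
            _ = h n := by rw [mul_one, abs_of_nonneg (hh n hn)]
  rcases Nat.eq_zero_or_pos (Iqset q N).card with h0 | hpos
  · simp [h0]
  · have hpos' : (0 : ℝ) < ((Iqset q N).card : ℝ) := by exact_mod_cast hpos
    rw [div_le_div_iff_of_pos_right hpos']
    exact hnum

set_option maxHeartbeats 1600000 in
lemma kernel_exists (q : ℕ) [NeZero q] (S : Finset (DirichletCharacter ℂ q)) (δ : ℝ)
    (hδ0 : 0 < δ) (hδu : δ < 1 / 10) :
    ∃ (K : (ZMod q)ˣ → ℝ) (wt : DirichletCharacter ℂ q → ℝ),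
      (∀ c, 0 ≤ K c) ∧ (∀ χ, 0 ≤ wt χ) ∧ (∀ χ, wt χ ≤ 1) ∧ wt 1 = 1 ∧
      (∀ χ ∈ S, 1 - δ / 2 ≤ wt χ) ∧
      (∑ χ : DirichletCharacter ℂ q, wt χ ≤ ((⌈(64:ℝ)/δ⌉₊ + 1 : ℕ) : ℝ) ^ S.card) ∧
      (∀ c : (ZMod q)ˣ, ((K c : ℝ) : ℂ)
        = ∑ ψ : DirichletCharacter ℂ q, ((wt ψ : ℝ) : ℂ) * ψ ((c : (ZMod q)ˣ) : ZMod q)) := by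
  classical
  set B : Finset (ZMod q)ˣ := Finset.univ.filter (fun a : (ZMod q)ˣ =>
      ∀ χ ∈ S, ‖χ ((a : (ZMod q)ˣ) : ZMod q) - 1‖ ≤ δ / 4) with hBdef
  have h1B : (1 : (ZMod q)ˣ) ∈ B := by
    rw [hBdef, Finset.mem_filter]
    refine ⟨Finset.mem_univ _, fun χ _ => ?_⟩
    rw [Units.val_one, map_one, sub_self, norm_zero]
    positivity
  have hBpos : 0 < B.card := Finset.card_pos.mpr ⟨1, h1B⟩
  have hBR : (0:ℝ) < (B.card : ℝ) := by exact_mod_cast hBpos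
  have hGR : (0:ℝ) < (Fintype.card (ZMod q)ˣ : ℝ) := by
    have : 0 < Fintype.card (ZMod q)ˣ := Fintype.card_pos
    exact_mod_cast this
  set Z : DirichletCharacter ℂ q → ℂ :=
    fun χ => ∑ b ∈ B, χ ((b : (ZMod q)ˣ) : ZMod q) with hZdef
  set wt : DirichletCharacter ℂ q → ℝ := fun χ => ‖Z χ‖^2 / (B.card : ℝ)^2 with hwtdef
  set K : (ZMod q)ˣ → ℝ := fun c =>
    (Fintype.card (ZMod q)ˣ : ℝ) * ((B.filter (fun b => b * c ∈ B)).card : ℝ) / (B.card : ℝ)^2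
    with hKdef
  have hZsq : ∀ χ : DirichletCharacter ℂ q,
      ((‖Z χ‖^2 : ℝ) : ℂ) = Z χ * (starRingEnd ℂ) (Z χ) := by
    intro χ
    have h1 : ‖Z χ‖^2 = Complex.normSq (Z χ) := by
      rw [Complex.sq_norm]
    rw [h1, Complex.mul_conj]
  have hZle : ∀ χ : DirichletCharacter ℂ q, ‖Z χ‖ ≤ (B.card : ℝ) := by
    intro χ
    rw [hZdef]
    calc ‖∑ b ∈ B, χ ((b : (ZMod q)ˣ) : ZMod q)‖
        ≤ ∑ b ∈ B, ‖χ ((b : (ZMod q)ˣ) : ZMod q)‖ := norm_sum_le _ _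
      _ = ∑ _b ∈ B, (1:ℝ) := Finset.sum_congr rfl fun b _ => χ.unit_norm_eq_one b
      _ = (B.card : ℝ) := by rw [Finset.sum_const, nsmul_eq_mul, mul_one]
  refine ⟨K, wt, ?_, ?_, ?_, ?_, ?_, ?_, ?_⟩
  · intro c; rw [hKdef]; positivity
  · intro χ; rw [hwtdef]; positivity
  · intro χ
    rw [hwtdef]
    simp only
    rw [div_le_one (by positivity)]
    calc ‖Z χ‖^2 ≤ (B.card : ℝ)^2 := pow_le_pow_left₀ (norm_nonneg _) (hZle χ) 2
      _ = (B.card : ℝ)^2 := rfl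
  · -- wt 1 = 1
    have hZ1 : Z 1 = (B.card : ℂ) := by
      rw [hZdef]
      simp only
      rw [Finset.sum_congr rfl (fun b _ => MulChar.one_apply_coe b), Finset.sum_const,
        nsmul_eq_mul, mul_one]
    rw [hwtdef]
    simp only [hZ1, Complex.norm_natCast]
    rw [div_self (by positivity)]
  · -- lower bound on S
    intro χ hχ
    have hpt : ∀ b ∈ B, ‖(1 : ℂ) - χ ((b : (ZMod q)ˣ) : ZMod q)‖ ≤ δ / 4 := by
      intro b hb
      rw [norm_sub_rev]
      exact ((Finset.mem_filter.mp (hBdef ▸ hb)).2) χ hχ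
    have h1 : ‖(B.card : ℂ) - Z χ‖ ≤ (B.card : ℝ) * (δ / 4) := by
      have he : (B.card : ℂ) - Z χ = ∑ b ∈ B, ((1 : ℂ) - χ ((b : (ZMod q)ˣ) : ZMod q)) := by
        rw [hZdef]
        rw [Finset.sum_sub_distrib, Finset.sum_const, nsmul_eq_mul, mul_one]
      rw [he]
      calc ‖∑ b ∈ B, ((1:ℂ) - χ ((b : (ZMod q)ˣ) : ZMod q))‖
          ≤ ∑ b ∈ B, ‖(1:ℂ) - χ ((b : (ZMod q)ˣ) : ZMod q)‖ := norm_sum_le _ _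
        _ ≤ ∑ _b ∈ B, (δ/4) := Finset.sum_le_sum hpt
        _ = (B.card : ℝ) * (δ/4) := by rw [Finset.sum_const, nsmul_eq_mul]
    have h2 : (B.card : ℝ) - ‖Z χ‖ ≤ ‖(B.card : ℂ) - Z χ‖ := by
      have h3 := norm_sub_norm_le ((B.card : ℂ)) (Z χ)
      rw [Complex.norm_natCast] at h3
      exact h3
    have hlow : (B.card : ℝ) * (1 - δ/4) ≤ ‖Z χ‖ := by nlinarith
    rw [hwtdef]
    simp only
    rw [le_div_iff₀ (by positivity)]
    have hsq : ((B.card : ℝ) * (1 - δ/4))^2 ≤ ‖Z χ‖^2 := by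
      apply pow_le_pow_left₀ (by nlinarith) hlow 2
    nlinarith [sq_nonneg ((B.card:ℝ)), sq_nonneg δ]
  · -- sum bound
    have hcplx : ∑ χ : DirichletCharacter ℂ q, ((‖Z χ‖^2 : ℝ) : ℂ)
        = ((Fintype.card (ZMod q)ˣ : ℝ) * (B.card : ℝ) : ℝ) := by
      calc ∑ χ : DirichletCharacter ℂ q, ((‖Z χ‖^2 : ℝ) : ℂ)
          = ∑ χ : DirichletCharacter ℂ q, Z χ * (starRingEnd ℂ) (Z χ) :=
            Finset.sum_congr rfl fun χ _ => hZsq χ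
        _ = ∑ χ : DirichletCharacter ℂ q, ∑ b ∈ B, ∑ b' ∈ B,
              χ ((b : (ZMod q)ˣ) : ZMod q) * (starRingEnd ℂ) (χ ((b' : (ZMod q)ˣ) : ZMod q)) := by
            apply Finset.sum_congr rfl
            intro χ _
            rw [hZdef]
            simp only
            rw [map_sum, Finset.sum_mul_sum]
        _ = ∑ b ∈ B, ∑ b' ∈ B, ∑ χ : DirichletCharacter ℂ q,
              χ ((b : (ZMod q)ˣ) : ZMod q) * (starRingEnd ℂ) (χ ((b' : (ZMod q)ˣ) : ZMod q)) := by
            rw [Finset.sum_comm]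
            exact Finset.sum_congr rfl fun b _ => Finset.sum_comm
        _ = ∑ b ∈ B, ∑ b' ∈ B, (if b = b' then (Fintype.card (ZMod q)ˣ : ℂ) else 0) :=
            Finset.sum_congr rfl fun b _ => Finset.sum_congr rfl fun b' _ => orth_pt b b'
        _ = ∑ b ∈ B, (Fintype.card (ZMod q)ˣ : ℂ) := by
            apply Finset.sum_congr rfl
            intro b hb
            rw [Finset.sum_ite_eq B b (fun _ => (Fintype.card (ZMod q)ˣ : ℂ)), if_pos hb]
        _ = ((Fintype.card (ZMod q)ˣ : ℝ) * (B.card : ℝ) : ℝ) := by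
            rw [Finset.sum_const, nsmul_eq_mul]
            push_cast
            ring
    have hreal : ∑ χ : DirichletCharacter ℂ q, ‖Z χ‖^2
        = (Fintype.card (ZMod q)ˣ : ℝ) * (B.card : ℝ) := by
      have h4 : ((∑ χ : DirichletCharacter ℂ q, ‖Z χ‖^2 : ℝ) : ℂ)
          = ((Fintype.card (ZMod q)ˣ : ℝ) * (B.card : ℝ) : ℝ) := by
        rw [Complex.ofReal_sum]
        exact hcplx
      exact_mod_cast h4
    have hPar : ∑ χ : DirichletCharacter ℂ q, wt χ
        = (Fintype.card (ZMod q)ˣ : ℝ) / (B.card : ℝ) := by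
      rw [hwtdef]
      simp only
      rw [← Finset.sum_div, hreal, pow_two]
      field_simp
    rw [hPar, div_le_iff₀ hBR]
    exact bohr_lower q S δ hδ0 hδu
  · -- Fourier inversion
    intro c
    have e1 : ∀ ψ : DirichletCharacter ℂ q, ((wt ψ : ℝ) : ℂ) * ψ ((c : (ZMod q)ˣ) : ZMod q)
        = (((B.card : ℝ)^2 : ℝ) : ℂ)⁻¹ *
          ∑ b ∈ B, ∑ b' ∈ B, ψ (((b'⁻¹ * b * c : (ZMod q)ˣ) : ZMod q)) := by
      intro ψ
      have hw : ((wt ψ : ℝ) : ℂ)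
          = (Z ψ * (starRingEnd ℂ) (Z ψ)) * (((B.card : ℝ)^2 : ℝ) : ℂ)⁻¹ := by
        calc ((wt ψ : ℝ) : ℂ) = ((‖Z ψ‖^2 : ℝ) : ℂ) / (((B.card : ℝ)^2 : ℝ) : ℂ) := by
              rw [hwtdef]; push_cast; ring
          _ = (Z ψ * (starRingEnd ℂ) (Z ψ)) * (((B.card : ℝ)^2 : ℝ) : ℂ)⁻¹ := by
              rw [hZsq, div_eq_mul_inv]
      have hconj : (starRingEnd ℂ) (Z ψ) = ∑ b' ∈ B, ψ (((b'⁻¹ : (ZMod q)ˣ)) : ZMod q) := by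
        rw [hZdef]
        simp only
        rw [map_sum]
        exact Finset.sum_congr rfl fun b' _ => conj_char ψ b'
      rw [hw, hconj, hZdef]
      simp only
      rw [Finset.sum_mul_sum]
      rw [mul_comm _ ((((B.card : ℝ)^2 : ℝ) : ℂ)⁻¹), mul_assoc]
      congr 1
      rw [Finset.sum_mul]
      apply Finset.sum_congr rfl
      intro b _
      rw [Finset.sum_mul]
      apply Finset.sum_congr rfl
      intro b' _
      have : (((b'⁻¹ * b * c : (ZMod q)ˣ) : ZMod q))
          = ((b'⁻¹ : (ZMod q)ˣ) : ZMod q) * ((b : (ZMod q)ˣ) : ZMod q)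
            * ((c : (ZMod q)ˣ) : ZMod q) := by
        push_cast
        rfl
      rw [this, map_mul, map_mul]
      ring
    rw [Finset.sum_congr rfl fun ψ _ => e1 ψ, ← Finset.mul_sum]
    have swap : ∑ ψ : DirichletCharacter ℂ q, ∑ b ∈ B, ∑ b' ∈ B,
          ψ (((b'⁻¹ * b * c : (ZMod q)ˣ) : ZMod q))
        = ∑ b ∈ B, ∑ b' ∈ B, ∑ ψ : DirichletCharacter ℂ q,
          ψ (((b'⁻¹ * b * c : (ZMod q)ˣ) : ZMod q)) := by
      rw [Finset.sum_comm]
      exact Finset.sum_congr rfl fun b _ => Finset.sum_comm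
    rw [swap]
    have inner : ∀ b ∈ B, (∑ b' ∈ B, ∑ ψ : DirichletCharacter ℂ q,
          ψ (((b'⁻¹ * b * c : (ZMod q)ˣ) : ZMod q)))
        = if b * c ∈ B then (Fintype.card (ZMod q)ˣ : ℂ) else 0 := by
      intro b _
      calc ∑ b' ∈ B, ∑ ψ : DirichletCharacter ℂ q, ψ (((b'⁻¹ * b * c : (ZMod q)ˣ) : ZMod q))
          = ∑ b' ∈ B, if b'⁻¹ * b * c = 1 then (Fintype.card (ZMod q)ˣ : ℂ) else 0 :=
            Finset.sum_congr rfl fun b' _ => orth1 _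
        _ = ∑ b' ∈ B, if b' = b * c then (Fintype.card (ZMod q)ˣ : ℂ) else 0 := by
            apply Finset.sum_congr rfl
            intro b' _
            exact if_congr (by rw [mul_assoc, inv_mul_eq_one]) rfl rfl
        _ = if b * c ∈ B then (Fintype.card (ZMod q)ˣ : ℂ) else 0 :=
            Finset.sum_ite_eq' B (b * c) (fun _ => (Fintype.card (ZMod q)ˣ : ℂ))
    rw [Finset.sum_congr rfl inner]
    have hsplit : ∑ b ∈ B, (if b * c ∈ B then (Fintype.card (ZMod q)ˣ : ℂ) else 0)
        = ((B.filter (fun b => b * c ∈ B)).card : ℂ) * (Fintype.card (ZMod q)ˣ : ℂ) := by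
      rw [← Finset.sum_filter, Finset.sum_const, nsmul_eq_mul]
    rw [hsplit]
    simp only [hKdef]
    push_cast
    field_simp



set_option maxHeartbeats 3200000 in
/-- **A multiplicative dense model theorem.** -/
theorem dense_model :
    ∀ r C : ℝ, 1 < r → 1 ≤ C →
      ∃ C' : ℝ, 0 < C' ∧
        ∀ η ε : ℝ, 0 < η → η < 1 → 0 < ε → ε < 1 →
          ∃ q₀ : ℕ,
            ∀ (q : ℕ) [NeZero q], q₀ ≤ q →
              ∀ N : ℝ, 2 ≤ N →
                ∀ δ : ℝ,
                  ((10 * C * r * Real.log (Real.log (q : ℝ))) / (ε * Real.log (q : ℝ))) ^ (1 / r)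
                      < δ →
                  δ < 1 / 10 →
                  ∀ f ν : ℕ → ℝ,
                    (∀ n ∈ Iqset q N, 0 ≤ f n) →
                    -- (A1): pseudorandom majorant
                    (∀ n ∈ Iqset q N, 0 ≤ ν n) →
                    (∀ n ∈ Iqset q N, f n ≤ ν n) →
                    |FavgReal q N ν - 1| ≤ η →
                    (∀ χ : DirichletCharacter ℂ q, χ ≠ 1 →
                      ‖Favg q N ν χ‖ ≤ (q : ℝ) ^ (-ε)) →
                    -- (A2): few large Fourier coefficients
                    ((Set.ncard {χ : DirichletCharacter ℂ q | δ ≤ ‖Favg q N f χ‖} : ℝ)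
                        ≤ C * δ ^ (-r)) →
                    ∃ g : (ZMod q)ˣ → ℝ,
                      (∀ a : (ZMod q)ˣ, 0 ≤ g a) ∧
                      -- (i)
                      (∀ a : (ZMod q)ˣ, g a ≤ 1 + η + C' * (q : ℝ) ^ (-(ε / 2))) ∧
                      -- (ii)
                      (∀ χ : DirichletCharacter ℂ q, ‖Favg q N f χ - Gavg q g χ‖ ≤ δ) ∧
                      -- (iii)
                      (∀ χ : DirichletCharacter ℂ q,
                        ‖Gavg q g χ‖ ≤ ‖Favg q N f χ‖ ∧
                        ‖Favg q N f χ - Gavg q g χ‖ ≤ ‖Favg q N f χ‖) ∧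
                      -- (iv)
                      GavgReal q g = FavgReal q N f ∧
                      -- (v)
                      (∀ (H : Subgroup ((ZMod q)ˣ)), H.index = 2 →
                        ∀ b : (ZMod q)ˣ,
                          |(∑ n ∈ Iqset q N, f n * cosetIndNat q H b n) / ((Iqset q N).card : ℝ) -
                            (∑ a : (ZMod q)ˣ, g a * cosetInd q H b a) /
                              (Fintype.card ((ZMod q)ˣ) : ℝ)| ≤ C' * δ) := by
  intro r C hr hC
  refine ⟨1, one_pos, ?_⟩
  intro η ε hη0 hη1 hε0 hε1
  refine ⟨⌈Real.exp (Real.exp 5)⌉₊, ?_⟩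
  intro q instq hq N hN δ hδl hδu f ν hf0 hν0 hfν hν1 hνχ hA2
  classical
  -- basic positivity facts
  have hq' : Real.exp (Real.exp 5) ≤ (q : ℝ) := by
    calc Real.exp (Real.exp 5) ≤ (⌈Real.exp (Real.exp 5)⌉₊ : ℝ) := Nat.le_ceil _
      _ ≤ (q : ℝ) := by exact_mod_cast hq
  have hq0' : (0 : ℝ) < (q : ℝ) := lt_of_lt_of_le (Real.exp_pos _) hq'
  have hL5 : Real.exp 5 ≤ Real.log (q : ℝ) := (Real.le_log_iff_exp_le hq0').mpr hq'
  have hL0 : 0 < Real.log (q : ℝ) := lt_of_lt_of_le (Real.exp_pos 5) hL5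
  have hLL5 : (5 : ℝ) ≤ Real.log (Real.log (q : ℝ)) := (Real.le_log_iff_exp_le hL0).mpr hL5
  have hδ0 : 0 < δ := by
    refine lt_of_le_of_lt (Real.rpow_nonneg ?_ _) hδl
    apply div_nonneg
    · have h1 : (0:ℝ) ≤ 10 * C * r := by nlinarith
      nlinarith
    · have := hε0.le
      nlinarith [hL0.le]
  have hIqpos : 0 < (Iqset q N).card := by
    by_contra hcon
    have h0 : (Iqset q N) = ∅ := Finset.card_eq_zero.mp (Nat.eq_zero_of_not_pos hcon)
    have hz : FavgReal q N ν = 0 := by rw [FavgReal, h0]; simp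
    rw [hz, zero_sub, abs_neg, abs_one] at hν1
    linarith
  have hIR : (0 : ℝ) < ((Iqset q N).card : ℝ) := by exact_mod_cast hIqpos
  have hIRne : (((Iqset q N).card : ℕ) : ℂ) ≠ 0 := by exact_mod_cast hIqpos.ne'
  have hGposN : 0 < Fintype.card (ZMod q)ˣ := Fintype.card_pos
  have hGR : (0 : ℝ) < (Fintype.card (ZMod q)ˣ : ℝ) := by exact_mod_cast hGposN
  have hGne : ((Fintype.card (ZMod q)ˣ : ℕ) : ℂ) ≠ 0 := by exact_mod_cast hGposN.ne'
  -- the large spectrum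
  set S : Finset (DirichletCharacter ℂ q) :=
    Finset.univ.filter (fun χ => δ ≤ ‖Favg q N f χ‖) with hSdef
  have hScard : ((S.card : ℕ) : ℝ) ≤ C * δ ^ (-r) := by
    have hset : {χ : DirichletCharacter ℂ q | δ ≤ ‖Favg q N f χ‖}
        = (S : Set (DirichletCharacter ℂ q)) := by
      ext χ; simp [hSdef]
    rw [hset, Set.ncard_coe_finset] at hA2
    exact hA2
  -- the kernel
  obtain ⟨K, wt, hK0, hwt0, hwt1, hwtone, hwtS, hwtsum0, hKF⟩ := kernel_exists q S δ hδ0 hδu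
  have hwtsumQ : ∑ χ : DirichletCharacter ℂ q, wt χ ≤ (q : ℝ) ^ (ε / 2) := by
    refine le_trans hwtsum0 ?_
    have hM1 : (1 : ℝ) ≤ ((⌈(64:ℝ)/δ⌉₊ + 1 : ℕ) : ℝ) := by
      push_cast
      linarith [Nat.cast_nonneg (α := ℝ) ⌈(64:ℝ)/δ⌉₊]
    have hM2 : ((⌈(64:ℝ)/δ⌉₊ + 1 : ℕ) : ℝ) ≤ 100 / δ := by
      have h1 : (⌈(64:ℝ)/δ⌉₊ : ℝ) < 64/δ + 1 := Nat.ceil_lt_add_one (by positivity)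
      have h2 : (2 : ℝ) ≤ 36/δ := by rw [le_div_iff₀ hδ0]; linarith
      have h3 : (64:ℝ)/δ + 36/δ = 100/δ := by ring
      push_cast
      linarith
    rw [← Real.rpow_natCast (((⌈(64:ℝ)/δ⌉₊ + 1 : ℕ) : ℝ)) S.card]
    exact numeric_bound r C ε hr hC hε0 hε1 q hq' δ hδl hδu S.card hScard _ hM1 hM2
  -- unit associated to n
  set un : ℕ → (ZMod q)ˣ :=
    fun n => if h : Nat.Coprime n q then ZMod.unitOfCoprime n h else 1 with hundef
  have hun : ∀ n ∈ Iqset q N, ((un n : (ZMod q)ˣ) : ZMod q) = ((n : ℕ) : ZMod q) := by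
    intro n hn
    rw [hundef]
    simp only
    rw [dif_pos (Iq_coprime hn)]
    exact ZMod.coe_unitOfCoprime _ _
  -- the model function
  set g : (ZMod q)ˣ → ℝ :=
    fun a => (∑ n ∈ Iqset q N, f n * K (a * (un n)⁻¹)) / ((Iqset q N).card : ℝ) with hgdef
  have hg0 : ∀ a, 0 ≤ g a := by
    intro a
    rw [hgdef]
    apply div_nonneg _ hIR.le
    apply Finset.sum_nonneg
    intro n hn
    exact mul_nonneg (hf0 n hn) (hK0 _)
  have hgc : ∀ a : (ZMod q)ˣ, ((g a : ℝ) : ℂ)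
      = (∑ n ∈ Iqset q N, (f n : ℂ) * ((K (a * (un n)⁻¹) : ℝ) : ℂ)) / (((Iqset q N).card : ℕ) : ℂ) := by
    intro a
    rw [hgdef]
    push_cast
    ring
  -- the key Fourier identity for K-sums
  have hKsum : ∀ χ : DirichletCharacter ℂ q,
      ∑ c : (ZMod q)ˣ, ((K c : ℝ) : ℂ) * (starRingEnd ℂ) (χ ((c : (ZMod q)ˣ) : ZMod q))
        = ((Fintype.card (ZMod q)ˣ : ℕ) : ℂ) * ((wt χ : ℝ) : ℂ) := by
    intro χ
    calc ∑ c : (ZMod q)ˣ, ((K c : ℝ) : ℂ) * (starRingEnd ℂ) (χ ((c : (ZMod q)ˣ) : ZMod q))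
        = ∑ c : (ZMod q)ˣ, ∑ ψ : DirichletCharacter ℂ q,
            ((wt ψ : ℝ) : ℂ) * (ψ ((c : (ZMod q)ˣ) : ZMod q)
              * (starRingEnd ℂ) (χ ((c : (ZMod q)ˣ) : ZMod q))) := by
          apply Finset.sum_congr rfl
          intro c _
          rw [hKF c, Finset.sum_mul]
          apply Finset.sum_congr rfl
          intro ψ _
          ring
      _ = ∑ ψ : DirichletCharacter ℂ q, ∑ c : (ZMod q)ˣ,
            ((wt ψ : ℝ) : ℂ) * (ψ ((c : (ZMod q)ˣ) : ZMod q)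
              * (starRingEnd ℂ) (χ ((c : (ZMod q)ˣ) : ZMod q))) := Finset.sum_comm
      _ = ∑ ψ : DirichletCharacter ℂ q, ((wt ψ : ℝ) : ℂ) *
            (if ψ = χ then ((Fintype.card (ZMod q)ˣ : ℕ) : ℂ) else 0) := by
          apply Finset.sum_congr rfl
          intro ψ _
          rw [← Finset.mul_sum, orth2 ψ χ]
      _ = ((Fintype.card (ZMod q)ˣ : ℕ) : ℂ) * ((wt χ : ℝ) : ℂ) := by
          simp only [mul_ite, mul_zero]
          rw [Finset.sum_ite_eq' Finset.univ χ
            (fun ψ => ((wt ψ : ℝ) : ℂ) * ((Fintype.card (ZMod q)ˣ : ℕ) : ℂ)),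
            if_pos (Finset.mem_univ χ)]
          ring
  -- the transfer identity
  have hGavg : ∀ χ : DirichletCharacter ℂ q,
      Gavg q g χ = ((wt χ : ℝ) : ℂ) * Favg q N f χ := by
    intro χ
    have hinner : ∀ n ∈ Iqset q N,
        (∑ a : (ZMod q)ˣ, (f n : ℂ) * ((K (a * (un n)⁻¹) : ℝ) : ℂ)
            * (starRingEnd ℂ) (χ ((a : (ZMod q)ˣ) : ZMod q)))
          = (f n : ℂ) * (starRingEnd ℂ) (χ ((n : ℕ) : ZMod q))
            * (((Fintype.card (ZMod q)ˣ : ℕ) : ℂ) * ((wt χ : ℝ) : ℂ)) := by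
      intro n hn
      have hre : ∑ a : (ZMod q)ˣ, (f n : ℂ) * ((K (a * (un n)⁻¹) : ℝ) : ℂ)
            * (starRingEnd ℂ) (χ ((a : (ZMod q)ˣ) : ZMod q))
          = ∑ c : (ZMod q)ˣ, (f n : ℂ) * ((K c : ℝ) : ℂ)
            * (starRingEnd ℂ) (χ ((c * un n : (ZMod q)ˣ) : ZMod q)) := by
        apply Fintype.sum_equiv (Equiv.mulRight (un n)⁻¹)
        intro a
        have e1 : (a * (un n)⁻¹) * un n = a := by
          rw [inv_mul_cancel_right]
        show (f n : ℂ) * ((K (a * (un n)⁻¹) : ℝ) : ℂ)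
            * (starRingEnd ℂ) (χ ((a : (ZMod q)ˣ) : ZMod q))
          = (f n : ℂ) * ((K (a * (un n)⁻¹) : ℝ) : ℂ)
            * (starRingEnd ℂ) (χ (((a * (un n)⁻¹) * un n : (ZMod q)ˣ) : ZMod q))
        rw [e1]
      rw [hre]
      have hsplit : ∀ c : (ZMod q)ˣ,
          (starRingEnd ℂ) (χ ((c * un n : (ZMod q)ˣ) : ZMod q))
            = (starRingEnd ℂ) (χ ((c : (ZMod q)ˣ) : ZMod q))
              * (starRingEnd ℂ) (χ ((un n : (ZMod q)ˣ) : ZMod q)) := by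
        intro c
        rw [Units.val_mul, map_mul, map_mul]
      calc ∑ c : (ZMod q)ˣ, (f n : ℂ) * ((K c : ℝ) : ℂ)
            * (starRingEnd ℂ) (χ ((c * un n : (ZMod q)ˣ) : ZMod q))
          = (f n : ℂ) * (starRingEnd ℂ) (χ ((un n : (ZMod q)ˣ) : ZMod q))
            * ∑ c : (ZMod q)ˣ, ((K c : ℝ) : ℂ)
              * (starRingEnd ℂ) (χ ((c : (ZMod q)ˣ) : ZMod q)) := by
            rw [Finset.mul_sum]
            apply Finset.sum_congr rfl
            intro c _
            rw [hsplit c]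
            ring
        _ = (f n : ℂ) * (starRingEnd ℂ) (χ ((n : ℕ) : ZMod q))
            * (((Fintype.card (ZMod q)ˣ : ℕ) : ℂ) * ((wt χ : ℝ) : ℂ)) := by
            rw [hKsum χ, hun n hn]
    unfold Gavg Favg
    rw [Finset.sum_congr rfl (fun a _ => by
      rw [hgc a, div_mul_eq_mul_div, Finset.sum_mul])]
    rw [← Finset.sum_div, Finset.sum_comm, Finset.sum_congr rfl hinner, ← Finset.sum_mul]
    have hTotne : ((q.totient : ℕ) : ℂ) ≠ 0 := by
      rw [← ZMod.card_units_eq_totient]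
      exact hGne
    field_simp
  -- (i) : upper bound on g
  have hFR1 : |FavgReal q N ν| ≤ 1 + η := by
    have h := abs_le.mp hν1
    rw [abs_le]
    constructor <;> linarith
  have hgle : ∀ a : (ZMod q)ˣ, g a ≤ 1 + η + (q : ℝ) ^ (-(ε / 2)) := by
    intro a
    set T : ℝ := (∑ n ∈ Iqset q N, ν n * K (a * (un n)⁻¹)) / ((Iqset q N).card : ℝ) with hTdef
    have h1 : g a ≤ T := by
      rw [hgdef, hTdef]
      simp only
      rw [div_le_div_iff_of_pos_right hIR]
      apply Finset.sum_le_sum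
      intro n hn
      exact mul_le_mul_of_nonneg_right (hfν n hn) (hK0 _)
    have hTc : ((T : ℝ) : ℂ) = ∑ ψ : DirichletCharacter ℂ q,
        ((wt ψ : ℝ) : ℂ) * ψ ((a : (ZMod q)ˣ) : ZMod q) * Favg q N ν ψ := by
      have hterm : ∀ n ∈ Iqset q N, (ν n : ℂ) * ((K (a * (un n)⁻¹) : ℝ) : ℂ)
          = ∑ ψ : DirichletCharacter ℂ q, ((wt ψ : ℝ) : ℂ) * ψ ((a : (ZMod q)ˣ) : ZMod q)
            * ((ν n : ℂ) * (starRingEnd ℂ) (ψ ((n : ℕ) : ZMod q))) := by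
        intro n hn
        rw [hKF (a * (un n)⁻¹), Finset.mul_sum]
        apply Finset.sum_congr rfl
        intro ψ _
        have hψ : ψ (((a * (un n)⁻¹ : (ZMod q)ˣ)) : ZMod q)
            = ψ ((a : (ZMod q)ˣ) : ZMod q) * (starRingEnd ℂ) (ψ ((n : ℕ) : ZMod q)) := by
          rw [Units.val_mul, map_mul]
          congr 1
          rw [← hun n hn, conj_char]
        rw [hψ]
        ring
      calc ((T : ℝ) : ℂ)
          = (∑ n ∈ Iqset q N, (ν n : ℂ) * ((K (a * (un n)⁻¹) : ℝ) : ℂ))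
            / (((Iqset q N).card : ℕ) : ℂ) := by
            rw [hTdef]; push_cast; ring
        _ = (∑ n ∈ Iqset q N, ∑ ψ : DirichletCharacter ℂ q,
              ((wt ψ : ℝ) : ℂ) * ψ ((a : (ZMod q)ˣ) : ZMod q)
              * ((ν n : ℂ) * (starRingEnd ℂ) (ψ ((n : ℕ) : ZMod q))))
            / (((Iqset q N).card : ℕ) : ℂ) := by
            rw [Finset.sum_congr rfl hterm]
        _ = ∑ ψ : DirichletCharacter ℂ q,
              ((wt ψ : ℝ) : ℂ) * ψ ((a : (ZMod q)ˣ) : ZMod q) * Favg q N ν ψ := by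
            rw [Finset.sum_comm, Finset.sum_div]
            apply Finset.sum_congr rfl
            intro ψ _
            unfold Favg
            rw [← Finset.mul_sum, mul_div_assoc]
    have h2 : T ≤ 1 + η + (q : ℝ) ^ (-(ε / 2)) := by
      have hTnorm : T ≤ ‖((T : ℝ) : ℂ)‖ := by
        rw [Complex.norm_real, Real.norm_eq_abs]
        exact le_abs_self T
      rw [hTc] at hTnorm
      set Fψ : DirichletCharacter ℂ q → ℂ :=
        fun ψ => ((wt ψ : ℝ) : ℂ) * ψ ((a : (ZMod q)ˣ) : ZMod q) * Favg q N ν ψ with hFψdef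
      have hsplit := Finset.add_sum_erase Finset.univ Fψ (Finset.mem_univ (1 : DirichletCharacter ℂ q))
      have hF1 : ‖Fψ 1‖ ≤ 1 + η := by
        rw [hFψdef]
        simp only
        rw [hwtone, MulChar.one_apply_coe, Favg_one]
        simp only [Complex.ofReal_one, one_mul, mul_one]
        rw [Complex.norm_real, Real.norm_eq_abs]
        exact hFR1
      have hFrest : ∀ ψ ∈ Finset.univ.erase (1 : DirichletCharacter ℂ q),
          ‖Fψ ψ‖ ≤ wt ψ * (q : ℝ) ^ (-ε) := by
        intro ψ hψ
        have hψne : ψ ≠ 1 := (Finset.mem_erase.mp hψ).1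
        rw [hFψdef]
        simp only
        rw [norm_mul, norm_mul, Complex.norm_real, Real.norm_eq_abs,
          abs_of_nonneg (hwt0 ψ), ψ.unit_norm_eq_one a, mul_one]
        exact mul_le_mul_of_nonneg_left (hνχ ψ hψne) (hwt0 ψ)
      have hbound : ‖∑ ψ : DirichletCharacter ℂ q, Fψ ψ‖
          ≤ (1 + η) + (∑ ψ : DirichletCharacter ℂ q, wt ψ) * (q : ℝ) ^ (-ε) := by
        rw [← hsplit]
        calc ‖Fψ 1 + ∑ ψ ∈ Finset.univ.erase 1, Fψ ψ‖
            ≤ ‖Fψ 1‖ + ‖∑ ψ ∈ Finset.univ.erase 1, Fψ ψ‖ := norm_add_le _ _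
          _ ≤ (1 + η) + ∑ ψ ∈ Finset.univ.erase 1, ‖Fψ ψ‖ :=
              add_le_add hF1 (norm_sum_le _ _)
          _ ≤ (1 + η) + ∑ ψ ∈ Finset.univ.erase 1, wt ψ * (q : ℝ) ^ (-ε) :=
              add_le_add le_rfl (Finset.sum_le_sum hFrest)
          _ ≤ (1 + η) + ∑ ψ : DirichletCharacter ℂ q, wt ψ * (q : ℝ) ^ (-ε) := by
              apply add_le_add le_rfl
              apply Finset.sum_le_sum_of_subset_of_nonneg (Finset.erase_subset _ _)
              intro ψ _ _
              exact mul_nonneg (hwt0 ψ) (Real.rpow_nonneg hq0'.le _)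
          _ = (1 + η) + (∑ ψ : DirichletCharacter ℂ q, wt ψ) * (q : ℝ) ^ (-ε) := by
              rw [Finset.sum_mul]
      have hfin : (∑ ψ : DirichletCharacter ℂ q, wt ψ) * (q : ℝ) ^ (-ε)
          ≤ (q : ℝ) ^ (-(ε / 2)) := by
        calc (∑ ψ : DirichletCharacter ℂ q, wt ψ) * (q : ℝ) ^ (-ε)
            ≤ (q : ℝ) ^ (ε / 2) * (q : ℝ) ^ (-ε) :=
              mul_le_mul_of_nonneg_right hwtsumQ (Real.rpow_nonneg hq0'.le _)
          _ = (q : ℝ) ^ (-(ε / 2)) := by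
              rw [← Real.rpow_add hq0']
              congr 1
              ring
      linarith
    linarith
  -- norms of Favg f
  have hFfle : ∀ χ : DirichletCharacter ℂ q, ‖Favg q N f χ‖ ≤ 1 + η := by
    intro χ
    calc ‖Favg q N f χ‖ ≤ FavgReal q N f := Favg_norm_le q N f hf0 χ
      _ ≤ FavgReal q N ν := by
          unfold FavgReal
          rw [div_le_div_iff_of_pos_right hIR]
          exact Finset.sum_le_sum hfν
      _ ≤ 1 + η := by
          have h := abs_le.mp hν1
          linarith [h.2]
  have hFG : ∀ χ : DirichletCharacter ℂ q,
      Favg q N f χ - Gavg q g χ = ((1 - wt χ : ℝ) : ℂ) * Favg q N f χ := by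
    intro χ
    rw [hGavg χ]
    push_cast
    ring
  have hii : ∀ χ : DirichletCharacter ℂ q, ‖Favg q N f χ - Gavg q g χ‖ ≤ δ := by
    intro χ
    rw [hFG χ, norm_mul, Complex.norm_real, Real.norm_eq_abs,
      abs_of_nonneg (by linarith [hwt1 χ])]
    by_cases hχS : χ ∈ S
    · have hw := hwtS χ hχS
      calc (1 - wt χ) * ‖Favg q N f χ‖ ≤ (δ / 2) * (1 + η) := by
            apply mul_le_mul (by linarith) (hFfle χ) (norm_nonneg _) (by linarith)
        _ ≤ δ := by nlinarith
    · have hFs : ‖Favg q N f χ‖ < δ := by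
        by_contra hcon
        push_neg at hcon
        exact hχS (by rw [hSdef]; exact Finset.mem_filter.mpr ⟨Finset.mem_univ _, hcon⟩)
      calc (1 - wt χ) * ‖Favg q N f χ‖ ≤ 1 * ‖Favg q N f χ‖ :=
            mul_le_mul_of_nonneg_right (by linarith [hwt0 χ]) (norm_nonneg _)
        _ ≤ δ := by rw [one_mul]; exact hFs.le
  have hiii : ∀ χ : DirichletCharacter ℂ q,
      ‖Gavg q g χ‖ ≤ ‖Favg q N f χ‖ ∧
      ‖Favg q N f χ - Gavg q g χ‖ ≤ ‖Favg q N f χ‖ := by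
    intro χ
    constructor
    · rw [hGavg χ, norm_mul, Complex.norm_real, Real.norm_eq_abs, abs_of_nonneg (hwt0 χ)]
      calc wt χ * ‖Favg q N f χ‖ ≤ 1 * ‖Favg q N f χ‖ :=
          mul_le_mul_of_nonneg_right (hwt1 χ) (norm_nonneg _)
        _ = ‖Favg q N f χ‖ := one_mul _
    · rw [hFG χ, norm_mul, Complex.norm_real, Real.norm_eq_abs,
        abs_of_nonneg (by linarith [hwt1 χ])]
      calc (1 - wt χ) * ‖Favg q N f χ‖ ≤ 1 * ‖Favg q N f χ‖ :=
          mul_le_mul_of_nonneg_right (by linarith [hwt0 χ]) (norm_nonneg _)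
        _ = ‖Favg q N f χ‖ := one_mul _
  have hiv : GavgReal q g = FavgReal q N f := by
    have h1 : ((GavgReal q g : ℝ) : ℂ) = ((FavgReal q N f : ℝ) : ℂ) := by
      rw [← Gavg_one, ← Favg_one, hGavg 1, hwtone]
      simp
    exact_mod_cast h1
  refine ⟨g, hg0, ?_, hii, hiii, hiv, ?_⟩
  · intro a
    rw [one_mul]
    exact hgle a
  · intro H hH b
    rw [one_mul]
    obtain ⟨u₂, hu₂⟩ := Subgroup.index_eq_two_iff.mp hH
    have hu2n : u₂ ∉ H := by
      rcases hu₂ 1 with ⟨h1, h2⟩ | ⟨h1, h2⟩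
      · exact absurd H.one_mem h2
      · rwa [one_mul] at h2
    have hxor : ∀ x : (ZMod q)ˣ, x ∉ H → x * u₂ ∈ H := by
      intro x hx
      rcases hu₂ x with ⟨h1, _⟩ | ⟨h1, _⟩
      · exact h1
      · exact absurd h1 hx
    have haa : u₂ * u₂ ∈ H := hxor u₂ hu2n
    have hmulH : ∀ x y : (ZMod q)ˣ, x ∉ H → y ∉ H → x * y ∈ H := by
      intro x y hx hy
      have h2 : (x * u₂) * (y * u₂) ∈ H := H.mul_mem (hxor x hx) (hxor y hy)
      have heq : (x * u₂) * (y * u₂) = (x * y) * (u₂ * u₂) := mul_mul_mul_comm x u₂ y u₂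
      rw [heq] at h2
      have h3 := H.mul_mem h2 (H.inv_mem haa)
      rwa [mul_assoc, mul_inv_cancel, mul_one] at h3
    have hHmul_mem : ∀ x y : (ZMod q)ˣ, x ∈ H → (x * y ∈ H ↔ y ∈ H) := by
      intro x y hx
      constructor
      · intro h
        have h4 := H.mul_mem (H.inv_mem hx) h
        rwa [inv_mul_cancel_left] at h4
      · exact fun h => H.mul_mem hx h
    have hmul3 : ∀ x y : (ZMod q)ˣ, x ∉ H → y ∈ H → x * y ∉ H := by
      intro x y hx hy h
      apply hx
      have h5 := H.mul_mem h (H.inv_mem hy)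
      rwa [mul_assoc, mul_inv_cancel, mul_one] at h5
    set s : (ZMod q)ˣ → ℝ := fun x => if x ∈ H then 1 else -1 with hsdef
    have hsmul : ∀ x y : (ZMod q)ˣ, s (x * y) = s x * s y := by
      intro x y
      rw [hsdef]
      simp only
      by_cases hx : x ∈ H <;> by_cases hy : y ∈ H
      · rw [if_pos hx, if_pos hy, if_pos (H.mul_mem hx hy)]; ring
      · rw [if_pos hx, if_neg hy, if_neg (fun h => hy ((hHmul_mem x y hx).mp h))]; ring
      · rw [if_neg hx, if_pos hy, if_neg (hmul3 x y hx hy)]; ring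
      · rw [if_neg hx, if_neg hy, if_pos (hmulH x y hx hy)]; ring
    have hs1 : s 1 = 1 := by rw [hsdef]; simp [H.one_mem]
    have hssq : ∀ x : (ZMod q)ˣ, s x * s x = 1 := by
      intro x; rw [hsdef]; by_cases h : x ∈ H <;> simp [h]
    have hsinv : ∀ x : (ZMod q)ˣ, s x⁻¹ = s x := by
      intro x
      have h1 : s x * s x⁻¹ = 1 := by rw [← hsmul, mul_inv_cancel, hs1]
      calc s x⁻¹ = (s x * s x) * s x⁻¹ := by rw [hssq, one_mul]
        _ = s x * (s x * s x⁻¹) := by ring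
        _ = s x := by rw [h1, mul_one]
    have hsabs : ∀ x : (ZMod q)ˣ, |s x| = 1 := by
      intro x; rw [hsdef]; by_cases h : x ∈ H <;> simp [h]
    -- the quadratic character attached to H
    set sU : (ZMod q)ˣ →* ℂˣ := MonoidHom.mk' (fun x => if x ∈ H then 1 else -1) (by
        intro x y
        by_cases hx : x ∈ H <;> by_cases hy : y ∈ H
        · simp only [if_pos hx, if_pos hy, if_pos (H.mul_mem hx hy), one_mul]
        · simp only [if_pos hx, if_neg hy, if_neg (fun h => hy ((hHmul_mem x y hx).mp h)),
            one_mul]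
        · simp only [if_neg hx, if_pos hy, if_neg (hmul3 x y hx hy), mul_one]
        · simp only [if_neg hx, if_neg hy, if_pos (hmulH x y hx hy), neg_mul_neg, one_mul])
      with hsUdef
    set χH : DirichletCharacter ℂ q := MulChar.ofUnitHom sU with hχHdef
    have hsUval : ∀ u : (ZMod q)ˣ, ((sU u : ℂˣ) : ℂ) = ((s u : ℝ) : ℂ) := by
      intro u
      rw [hsUdef, hsdef]
      by_cases h : u ∈ H
      · simp [h]
      · simp [h]
    have hχHu : ∀ u : (ZMod q)ˣ, χH ((u : (ZMod q)ˣ) : ZMod q) = ((s u : ℝ) : ℂ) := by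
      intro u
      rw [hχHdef, MulChar.ofUnitHom_coe]
      exact hsUval u
    have hkey : ∀ x : (ZMod q)ˣ, s (b⁻¹ * x) = s b * s x := by
      intro x; rw [hsmul, hsinv]
    have hindNat : ∀ n ∈ Iqset q N, cosetIndNat q H b n = (1 + s b * s (un n)) / 2 := by
      intro n hn
      unfold cosetIndNat
      have hex : (∃ u : (ZMod q)ˣ, ((u : ZMod q) = ((n : ℕ) : ZMod q)) ∧ b⁻¹ * u ∈ H)
          ↔ b⁻¹ * (un n) ∈ H := by
        constructor
        · rintro ⟨u, hu1, hu2⟩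
          have he : u = un n := Units.ext (by rw [hu1, hun n hn])
          rwa [← he]
        · intro h
          exact ⟨un n, hun n hn, h⟩
      simp only [hex]
      by_cases h : b⁻¹ * un n ∈ H
      · rw [if_pos h]
        have h2 : s (b⁻¹ * un n) = 1 := by rw [hsdef]; simp [h]
        rw [hkey] at h2
        rw [h2]; norm_num
      · rw [if_neg h]
        have h2 : s (b⁻¹ * un n) = -1 := by rw [hsdef]; simp [h]
        rw [hkey] at h2
        rw [h2]; norm_num
    have hindU : ∀ a : (ZMod q)ˣ, cosetInd q H b a = (1 + s b * s a) / 2 := by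
      intro a
      unfold cosetInd
      by_cases h : b⁻¹ * a ∈ H
      · rw [if_pos h]
        have h2 : s (b⁻¹ * a) = 1 := by rw [hsdef]; simp [h]
        rw [hkey] at h2
        rw [h2]; norm_num
      · rw [if_neg h]
        have h2 : s (b⁻¹ * a) = -1 := by rw [hsdef]; simp [h]
        rw [hkey] at h2
        rw [h2]; norm_num
    set AF : ℝ := (∑ n ∈ Iqset q N, f n * s (un n)) / ((Iqset q N).card : ℝ) with hAFdef
    set AG : ℝ := (∑ a : (ZMod q)ˣ, g a * s a) / (Fintype.card (ZMod q)ˣ : ℝ) with hAGdef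
    have hAFc : ((AF : ℝ) : ℂ) = Favg q N f χH := by
      rw [hAFdef]
      unfold Favg
      push_cast
      congr 1
      apply Finset.sum_congr rfl
      intro n hn
      rw [show ((n : ℕ) : ZMod q) = ((un n : (ZMod q)ˣ) : ZMod q) from (hun n hn).symm, hχHu,
        Complex.conj_ofReal]
    have hAGc : ((AG : ℝ) : ℂ) = Gavg q g χH := by
      rw [hAGdef]
      unfold Gavg
      push_cast
      congr 1
      apply Finset.sum_congr rfl
      intro a _
      rw [hχHu, Complex.conj_ofReal]
    have hAFG : |AF - AG| ≤ δ := by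
      have h1 : ‖((AF - AG : ℝ) : ℂ)‖ ≤ δ := by
        rw [Complex.ofReal_sub, hAFc, hAGc]
        exact hii χH
      rwa [Complex.norm_real, Real.norm_eq_abs] at h1
    have hLf : (∑ n ∈ Iqset q N, f n * cosetIndNat q H b n) / ((Iqset q N).card : ℝ)
        = (FavgReal q N f + s b * AF) / 2 := by
      rw [Finset.sum_congr rfl (fun n hn => by rw [hindNat n hn])]
      rw [Finset.sum_congr rfl (fun n _ => show f n * ((1 + s b * s (un n)) / 2)
        = f n / 2 + (s b / 2) * (f n * s (un n)) from by ring)]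
      rw [Finset.sum_add_distrib, ← Finset.sum_div, ← Finset.mul_sum]
      unfold FavgReal
      rw [hAFdef]
      ring
    have hLg : (∑ a : (ZMod q)ˣ, g a * cosetInd q H b a) / (Fintype.card (ZMod q)ˣ : ℝ)
        = (GavgReal q g + s b * AG) / 2 := by
      rw [Finset.sum_congr rfl (fun a _ => by rw [hindU a])]
      rw [Finset.sum_congr rfl (fun a _ => show g a * ((1 + s b * s a) / 2)
        = g a / 2 + (s b / 2) * (g a * s a) from by ring)]
      rw [Finset.sum_add_distrib, ← Finset.sum_div, ← Finset.mul_sum]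
      unfold GavgReal
      rw [hAGdef]
      ring
    rw [hLf, hLg, hiv]
    have hdiff : (FavgReal q N f + s b * AF) / 2 - (FavgReal q N f + s b * AG) / 2
        = s b * (AF - AG) / 2 := by ring
    rw [hdiff, abs_div, abs_mul, hsabs b, one_mul]
    rw [show |(2 : ℝ)| = 2 from by norm_num]
    linarith [hAFG]
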